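/- Let Ω be second countable, (T(t))_{t≥0} a positive strong Feller semigroup on B_b(Ω), and μ a strictly positive, finite, invariant Borel measure. Suppose that for every x ∈ Ω and t > 0 there exists a finite positive Borel measure μ_{t,x} with (T(t)f)(x) = ∫ f dμ_{t,x} for all f ∈ B_b(Ω). Then each μ_{t,x} is absolutely continuous with respect to μ, i.e., there exists k_{t,x} ∈ L¹(Ω,μ) with (T(t)f)(x) = ∫ k_{t,x} f dμ for all f ∈ B_b(Ω). -/

import Mathlib

open MeasureTheory Filter Topology Set

/-- `Bb f`: `f` is a bounded Borel measurable real-valued function. -/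
def Bb {Ω : Type*} [MeasurableSpace Ω] (f : Ω → ℝ) : Prop :=
  Measurable f ∧ ∃ C : ℝ, ∀ x, |f x| ≤ C

theorem stmt_7 {Ω : Type*} [TopologicalSpace Ω] [T2Space Ω] [SecondCountableTopology Ω]
    [MeasurableSpace Ω] [BorelSpace Ω]
    (μ : Measure Ω) [IsFiniteMeasure μ]
    (hμpos : ∀ U : Set Ω, IsOpen U → U.Nonempty → 0 < μ U)
    (T : ℝ → (Ω → ℝ) → (Ω → ℝ))
    (hTBb : ∀ t, 0 ≤ t → ∀ f, Bb f → Bb (T t f))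
    (hadd : ∀ t, 0 ≤ t → ∀ f g, Bb f → Bb g → T t (f + g) = T t f + T t g)
    (hsmul : ∀ t, 0 ≤ t → ∀ (c : ℝ) (f), Bb f → T t (c • f) = c • T t f)
    (hpos : ∀ t, 0 ≤ t → ∀ f, Bb f → (∀ x, 0 ≤ f x) → ∀ x, 0 ≤ T t f x)
    (hT0 : ∀ f, Bb f → T 0 f = f)
    (hsg : ∀ s t : ℝ, 0 ≤ s → 0 ≤ t → ∀ f, Bb f → T (s + t) f = T s (T t f))
    (hSF : ∀ t, 0 < t → ∀ f, Bb f → Continuous (T t f))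
    (hinv : ∀ t, 0 ≤ t → ∀ f, Bb f → ∫ x, T t f x ∂μ = ∫ x, f x ∂μ)
    (hmeas : ∀ t, 0 < t → ∀ x : Ω, ∃ ν : Measure Ω, IsFiniteMeasure ν ∧
      ∀ f, Bb f → T t f x = ∫ y, f y ∂ν) :
    ∀ t, 0 < t → ∀ x : Ω, ∀ ν : Measure Ω, IsFiniteMeasure ν →
      (∀ f, Bb f → T t f x = ∫ y, f y ∂ν) →
      ν ≪ μ ∧ ∃ k : Ω → ℝ, Integrable k μ ∧
        ∀ f, Bb f → T t f x = ∫ y, k y * f y ∂μ := by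
  intro t ht x ν hνfin hν
  have hac : ν ≪ μ := by
    apply Measure.AbsolutelyContinuous.mk
    intro A hA hA0
    -- indicator function is Bb
    have hBb : Bb (A.indicator (1 : Ω → ℝ)) := by
      refine ⟨(measurable_one).indicator hA, 1, fun y => ?_⟩
      by_cases hy : y ∈ A <;> simp [indicator, hy]
    set g := T t (A.indicator (1 : Ω → ℝ)) with hg
    have hgBb : Bb g := hTBb t ht.le _ hBb
    have hg0 : ∀ y, 0 ≤ g y := by
      refine hpos t ht.le _ hBb fun y => ?_
      by_cases hy : y ∈ A <;> simp [indicator, hy]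
    have hgcont : Continuous g := hSF t ht _ hBb
    have hgint : Integrable g μ := by
      obtain ⟨C, hC⟩ := hgBb.2
      exact ⟨hgBb.1.aestronglyMeasurable,
        HasFiniteIntegral.of_bounded (C := C) (ae_of_all _ fun y => by
          simpa [Real.norm_eq_abs] using hC y)⟩
    have hind : ∫ y, A.indicator (1 : Ω → ℝ) y ∂μ = 0 := by
      rw [integral_indicator hA]
      simp [Measure.real, hA0]
    have hgmean : ∫ y, g y ∂μ = 0 := by
      rw [hinv t ht.le _ hBb, hind]
    have hgae : g =ᵐ[μ] 0 :=
      (integral_eq_zero_iff_of_nonneg hg0 hgint).mp hgmean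
    -- the set where g ≠ 0 is open and μ-null, hence empty
    have hgzero : ∀ y, g y = 0 := by
      by_contra h
      push_neg at h
      obtain ⟨y, hy⟩ := h
      have hU : IsOpen {z | g z ≠ 0} := isOpen_ne_fun hgcont continuous_const
      have hUpos := hμpos _ hU ⟨y, hy⟩
      have : μ {z | g z ≠ 0} = 0 := by
        have := hgae
        rw [Filter.EventuallyEq, ae_iff] at this
        simpa using this
      simp [this] at hUpos
    -- transfer to ν
    have hx0 : T t (A.indicator (1 : Ω → ℝ)) x = 0 := hgzero x
    have : (∫ y, A.indicator (1 : Ω → ℝ) y ∂ν) = 0 := by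
      rw [← hν _ hBb, hx0]
    rw [integral_indicator hA] at this
    simp only [Pi.one_apply, integral_const, smul_eq_mul, mul_one] at this
    have := (ENNReal.toReal_eq_zero_iff _).mp (by simpa [Measure.real] using this)
    rcases this with h | h
    · exact h
    · exact absurd h (measure_ne_top ν A)
  refine ⟨hac, fun y => (ν.rnDeriv μ y).toReal, Measure.integrable_toReal_rnDeriv, ?_⟩
  intro f hf
  rw [hν f hf, ← integral_rnDeriv_smul hac (f := f)]
  simp [smul_eq_mul]
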